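/- arXiv:1702.03479 — 2 statements merged into one kernel-verified Lean document; each statement's English description precedes it below -/
import Mathlib

section
/- Let d and N be positive integers with N ≥ 2^d. Let f ∈ ℝ^d be a vector all of whose entries are nonzero, and let v_0, v_1, …, v_N be vectors in ℝ^d. Then there exist indices j and k with 0 ≤ j < k ≤ N such that every entry of the vector f + v_k − v_j is nonzero. (Lemma 3.2 of the paper.) -/
/-- Lemma 3.2: forbidden-values lemma for vectors in ℝ^d. -/
theorem forbidden_values (d N : ℕ) (hd : 0 < d) (hN : 0 < N) (hNd : 2 ^ d ≤ N)
    (f : Fin d → ℝ) (hf : ∀ s, f s ≠ 0) (v : ℕ → Fin d → ℝ) :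
    ∃ j k : ℕ, j < k ∧ k ≤ N ∧ ∀ s : Fin d, f s + v k s - v j s ≠ 0 := by
  -- color each index by the parity of ⌊v i s / f s⌋ in each coordinate
  set g : Fin (N + 1) → (Fin d → ZMod 2) :=
    fun i s => ((⌊v i s / f s⌋ : ℤ) : ZMod 2) with hg
  have hcard : Fintype.card (Fin d → ZMod 2) < Fintype.card (Fin (N + 1)) := by
    simp only [Fintype.card_fun, Fintype.card_fin, ZMod.card]
    omega
  obtain ⟨a, b, hab, heq⟩ := Fintype.exists_ne_map_eq_of_card_lt g hcard
  have hne : (a : ℕ) ≠ (b : ℕ) := fun h => hab (Fin.ext h)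
  -- WLOG a < b
  wlog hlt : (a : ℕ) < (b : ℕ) generalizing a b
  · exact this b a hab.symm heq.symm hne.symm (by omega)
  refine ⟨(a : ℕ), (b : ℕ), hlt, Nat.lt_succ_iff.mp b.isLt, fun s hbad => ?_⟩
  have hj : v a s = f s + v b s := by linarith
  have hdiv : v a s / f s = v b s / f s + 1 := by
    field_simp [hf s, hj]; linarith
  have hfloor : ⌊v a s / f s⌋ = ⌊v b s / f s⌋ + 1 := by
    rw [hdiv]
    exact_mod_cast Int.floor_add_intCast (v b s / f s) 1
  have := congrFun heq s
  simp only [hg, hfloor] at this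
  push_cast at this
  have h1 : (1 : ZMod 2) = 0 := by linear_combination this
  exact one_ne_zero h1
end

section
/- Let q, S, T be positive integers, and let A and B be integers with A ≥ 2^S · q^{S+T} and B ≥ 3^S · 2^T · (S+T) · q^{S+T}. Let j_1, …, j_A be vectors in ℤ^{S+T} whose first S entries are all nonzero, and let l_1, …, l_B be vectors in ℤ^{S+T} whose last T entries are all nonzero. Then there exist a nonempty subset 𝒜 ⊆ {1, …, A} and a (possibly empty) subset ℬ ⊆ {1, …, B} such that every entry of the vector Σ_{a∈𝒜} j_a + Σ_{b∈ℬ} l_b is a nonzero multiple of q. (The arithmetic core of Proposition 3.1: the construction of the sublink 𝒵 = Z_1 ∪ ⋯ ∪ Z_C whose total linking vector z_0 with 𝒳 ∪ 𝒴 has every entry a nonzero multiple of q, where j_a = link(J_a, 𝒳∪𝒴) and l_b = link(L_b, 𝒳∪𝒴).) -/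
lemma prefix_block (q d : ℕ) (hq : 0 < q) (g : ℕ → Fin d → ℤ) (a : ℕ) :
    ∃ u v : ℕ, a ≤ u ∧ u < v ∧ v ≤ a + q ^ d ∧
      ∀ s : Fin d, (q : ℤ) ∣ ∑ i ∈ Finset.Ico u v, g i s := by
  haveI : NeZero q := ⟨hq.ne'⟩
  set n := q ^ d with hn
  have hcard : (Finset.univ : Finset (Fin d → ZMod q)).card < (Finset.Icc a (a + n)).card := by
    rw [Finset.card_univ, Fintype.card_fun, Fintype.card_fin, ZMod.card, Nat.card_Icc]
    omega
  obtain ⟨u', hu', v', hv', hne, heq⟩ :=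
    Finset.exists_ne_map_eq_of_card_lt_of_maps_to hcard
      (f := fun k => fun s : Fin d => ((∑ i ∈ Finset.Ico a k, g i s : ℤ) : ZMod q))
      (fun x _ => Finset.mem_univ _)
  simp only [Finset.mem_Icc] at hu' hv'
  -- wlog u' < v'
  rcases hne.lt_or_gt with h | h
  · refine ⟨u', v', hu'.1, h, hv'.2, fun s => ?_⟩
    have key : ((∑ i ∈ Finset.Ico u' v', g i s : ℤ) : ZMod q) = 0 := by
      have := congrFun heq s
      have hsplit := Finset.sum_Ico_consecutive (fun i => g i s) hu'.1 h.le
      have : ((∑ i ∈ Finset.Ico a u', g i s : ℤ) : ZMod q) +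
          ((∑ i ∈ Finset.Ico u' v', g i s : ℤ) : ZMod q) =
          ((∑ i ∈ Finset.Ico a u', g i s : ℤ) : ZMod q) := by
        rw [← Int.cast_add, hsplit, this]
      linear_combination this
    exact (ZMod.intCast_zmod_eq_zero_iff_dvd _ q).mp key
  · refine ⟨v', u', hv'.1, h, hu'.2, fun s => ?_⟩
    have key : ((∑ i ∈ Finset.Ico v' u', g i s : ℤ) : ZMod q) = 0 := by
      have := congrFun heq s
      have hsplit := Finset.sum_Ico_consecutive (fun i => g i s) hv'.1 h.le
      have : ((∑ i ∈ Finset.Ico a v', g i s : ℤ) : ZMod q) +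
          ((∑ i ∈ Finset.Ico v' u', g i s : ℤ) : ZMod q) =
          ((∑ i ∈ Finset.Ico a v', g i s : ℤ) : ZMod q) := by
        rw [← Int.cast_add, hsplit, ← this]
      linear_combination this
    exact (ZMod.intCast_zmod_eq_zero_iff_dvd _ q).mp key

lemma sum_shift_zero_unique (f : ℕ → ℤ) (x : ℤ) (K : ℕ)
    (h : (∀ c < K, 0 < f c) ∨ (∀ c < K, f c < 0)) :
    ∀ k k', k ≤ K → k' ≤ K → x + ∑ c ∈ Finset.range k, f c = 0 →
      x + ∑ c ∈ Finset.range k', f c = 0 → k = k' := by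
  have key : ∀ a b, a < b → b ≤ K → x + ∑ c ∈ Finset.range a, f c = 0 →
      x + ∑ c ∈ Finset.range b, f c = 0 → False := by
    intro a b hab hbK e1 e2
    have hIco : ∑ c ∈ Finset.Ico a b, f c = 0 := by
      rw [Finset.sum_Ico_eq_sub f hab.le]; linarith
    have hlt : ∀ c ∈ Finset.Ico a b, c < K := by
      intro c hc; have := Finset.mem_Ico.mp hc; omega
    have hne : (Finset.Ico a b).Nonempty := ⟨a, Finset.mem_Ico.mpr ⟨le_refl a, hab⟩⟩
    rcases h with hp | hn
    · exact absurd hIco (Finset.sum_pos (fun c hc => hp c (hlt c hc)) hne).ne'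
    · exact absurd hIco (Finset.sum_neg (fun c hc => hn c (hlt c hc)) hne).ne
  intro k k' hk hk' h1 h2
  rcases lt_trichotomy k k' with hlt | heq | hgt
  · exact absurd (key k k' hlt hk' h1 h2) not_false
  · exact heq
  · exact absurd (key k' k hgt hk h2 h1) not_false

theorem partA (q S T A : ℕ) (hq : 0 < q) (hS : 0 < S)
    (hA : 2 ^ S * q ^ (S + T) ≤ A)
    (J : ℕ → Fin (S + T) → ℤ)
    (hJ : ∀ a : ℕ, 1 ≤ a → a ≤ A → ∀ s : Fin (S + T), (s : ℕ) < S → J a s ≠ 0) :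
    ∃ 𝒜 : Finset ℕ, 𝒜 ⊆ Finset.Icc 1 A ∧ 𝒜.Nonempty ∧
      ∀ s : Fin (S + T),
        ((s : ℕ) < S → (∑ a ∈ 𝒜, J a s) ≠ 0) ∧ (q : ℤ) ∣ ∑ a ∈ 𝒜, J a s := by
  set n := q ^ (S + T) with hn
  have hn0 : 0 < n := Nat.pow_pos (n := S + T) hq |>.trans_le (le_refl _)
  -- sign class
  obtain ⟨σ, -, hσ⟩ := Finset.exists_le_card_fiber_of_mul_le_card_of_maps_to
    (s := Finset.Icc 1 A) (t := (Finset.univ : Finset (Fin S → Bool)))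
    (f := fun a => fun i : Fin S => decide (0 < J a (Fin.castAdd T i)))
    (n := n) (fun a _ => Finset.mem_univ _) Finset.univ_nonempty
    (by rw [Finset.card_univ, Fintype.card_fun, Fintype.card_bool, Fintype.card_fin,
          Nat.card_Icc, Nat.add_sub_cancel]; exact hA)
  set FA := (Finset.Icc 1 A).filter
    (fun a => (fun i : Fin S => decide (0 < J a (Fin.castAdd T i))) = σ) with hFA
  set eA := FA.orderEmbOfCardLe hσ with heA
  set jA : ℕ → ℕ := fun i => if h : i < n then eA ⟨i, h⟩ else 0 with hjA
  have hjAmem : ∀ i, i < n → jA i ∈ FA := by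
    intro i hi; simp only [hjA, dif_pos hi]; exact FA.orderEmbOfCardLe_mem hσ _
  have hjAmono : ∀ i j, i < j → j < n → jA i < jA j := by
    intro i j hij hj
    simp only [hjA, dif_pos hj, dif_pos (hij.trans hj)]
    exact eA.strictMono (by exact hij)
  obtain ⟨u, v, hu0, huv, hvn, hdvd⟩ := prefix_block q (S + T) hq (fun i => J (jA i)) 0
  rw [zero_add] at hvn
  have hIltn : ∀ i ∈ Finset.Ico u v, i < n := fun i hi => by
    have := Finset.mem_Ico.mp hi; omega
  have hinj : ∀ x ∈ Finset.Ico u v, ∀ y ∈ Finset.Ico u v, jA x = jA y → x = y := by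
    intro x hx y hy hxy
    rcases lt_trichotomy x y with h | h | h
    · exact absurd hxy (hjAmono x y h (hIltn y hy)).ne
    · exact h
    · exact absurd hxy.symm (hjAmono y x h (hIltn x hx)).ne
  refine ⟨(Finset.Ico u v).image jA, ?_, ?_, ?_⟩
  · intro a ha
    obtain ⟨i, hi, rfl⟩ := Finset.mem_image.mp ha
    exact (Finset.filter_subset _ _) (hjAmem i (hIltn i hi))
  · exact ⟨jA u, Finset.mem_image.mpr ⟨u, Finset.mem_Ico.mpr ⟨le_refl u, huv⟩, rfl⟩⟩
  · intro s
    have hsum : ∑ a ∈ (Finset.Ico u v).image jA, J a s = ∑ i ∈ Finset.Ico u v, J (jA i) s :=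
      Finset.sum_image hinj
    constructor
    · intro hs
      rw [hsum]
      have hmem : ∀ i ∈ Finset.Ico u v, 1 ≤ jA i ∧ jA i ≤ A := by
        intro i hi
        have := Finset.mem_Icc.mp ((Finset.filter_subset _ _) (hjAmem i (hIltn i hi)))
        exact this
      have hsign : ∀ i ∈ Finset.Ico u v,
          decide (0 < J (jA i) s) = σ ⟨(s : ℕ), hs⟩ := by
        intro i hi
        have hc := (Finset.mem_filter.mp (hjAmem i (hIltn i hi))).2
        have := congrFun hc ⟨(s : ℕ), hs⟩
        have hcast : Fin.castAdd T ⟨(s : ℕ), hs⟩ = s := Fin.ext rfl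
        rwa [hcast] at this
      have hne : (Finset.Ico u v).Nonempty := ⟨u, Finset.mem_Ico.mpr ⟨le_refl u, huv⟩⟩
      cases hb : σ ⟨(s : ℕ), hs⟩ with
      | true =>
        refine (Finset.sum_pos (fun i hi => ?_) hne).ne'
        exact of_decide_eq_true ((hsign i hi).trans hb)
      | false =>
        refine (Finset.sum_neg (fun i hi => ?_) hne).ne
        have hnpos := of_decide_eq_false ((hsign i hi).trans hb)
        have hnz := hJ (jA i) (hmem i hi).1 (hmem i hi).2 s hs
        omega
    · rw [hsum]; exact hdvd s

theorem partB (q S T B : ℕ) (hq : 0 < q)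
    (hB : 3 ^ S * 2 ^ T * (S + T) * q ^ (S + T) ≤ B)
    (L : ℕ → Fin (S + T) → ℤ)
    (hL : ∀ b : ℕ, 1 ≤ b → b ≤ B → ∀ s : Fin (S + T), S ≤ (s : ℕ) → L b s ≠ 0) :
    ∃ (𝓑 : ℕ → Finset ℕ) (y : ℕ → Fin (S + T) → ℤ),
      (∀ k, k ≤ S + T → 𝓑 k ⊆ Finset.Icc 1 B) ∧
      (∀ k, k ≤ S + T → ∀ s, ∑ b ∈ 𝓑 k, L b s = ∑ c ∈ Finset.range k, y c s) ∧
      (∀ c, c < S + T → ∀ s, (q : ℤ) ∣ y c s) ∧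
      (∀ s : Fin (S + T),
        ((s : ℕ) < S →
          ((∀ c < S + T, 0 < y c s) ∨ (∀ c < S + T, y c s < 0) ∨ (∀ c < S + T, y c s = 0))) ∧
        (S ≤ (s : ℕ) → ((∀ c < S + T, 0 < y c s) ∨ (∀ c < S + T, y c s < 0)))) := by
  set n := q ^ (S + T) with hn
  have hn0 : 0 < n := Nat.pow_pos (n := S + T) hq
  set M := (S + T) * n with hM
  -- sign class
  obtain ⟨τ, -, hτ⟩ := Finset.exists_le_card_fiber_of_mul_le_card_of_maps_to
    (s := Finset.Icc 1 B) (t := (Finset.univ : Finset ((Fin S → Fin 3) × (Fin T → Fin 2))))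
    (f := fun b => (fun i : Fin S => if 0 < L b (Fin.castAdd T i) then (0 : Fin 3)
        else if L b (Fin.castAdd T i) = 0 then 1 else 2,
      fun i : Fin T => if 0 < L b (Fin.natAdd S i) then (0 : Fin 2) else 1))
    (n := M) (fun b _ => Finset.mem_univ _) Finset.univ_nonempty
    (by
      rw [Finset.card_univ, Fintype.card_prod, Fintype.card_fun, Fintype.card_fun,
        Fintype.card_fin, Fintype.card_fin, Fintype.card_fin, Fintype.card_fin,
        Nat.card_Icc, Nat.add_sub_cancel, hM, hn]
      calc 3 ^ S * 2 ^ T * ((S + T) * q ^ (S + T))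
          = 3 ^ S * 2 ^ T * (S + T) * q ^ (S + T) := by ring
        _ ≤ B := hB)
  set FB := (Finset.Icc 1 B).filter
    (fun b => (fun i : Fin S => if 0 < L b (Fin.castAdd T i) then (0 : Fin 3)
        else if L b (Fin.castAdd T i) = 0 then 1 else 2,
      fun i : Fin T => if 0 < L b (Fin.natAdd S i) then (0 : Fin 2) else 1) = τ) with hFB
  set eB := FB.orderEmbOfCardLe hτ with heB
  set lB : ℕ → ℕ := fun i => if h : i < M then eB ⟨i, h⟩ else 0 with hlB
  have hlBmem : ∀ i, i < M → lB i ∈ FB := by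
    intro i hi; simp only [hlB, dif_pos hi]; exact FB.orderEmbOfCardLe_mem hτ _
  have hlBmono : ∀ i j, i < j → j < M → lB i < lB j := by
    intro i j hij hj
    simp only [hlB, dif_pos hj, dif_pos (hij.trans hj)]
    exact eB.strictMono (by exact hij)
  -- blocks
  have hblk : ∀ c : ℕ, ∃ u v : ℕ, c * n ≤ u ∧ u < v ∧ v ≤ c * n + n ∧
      ∀ s, (q : ℤ) ∣ ∑ i ∈ Finset.Ico u v, L (lB i) s :=
    fun c => prefix_block q (S + T) hq (fun i => L (lB i)) (c * n)
  choose bu bv hbu hbuv hbv hbdvd using hblk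
  set y : ℕ → Fin (S + T) → ℤ := fun c s => ∑ i ∈ Finset.Ico (bu c) (bv c), L (lB i) s with hy
  -- block index bounds
  have hblt : ∀ c, c < S + T → ∀ i ∈ Finset.Ico (bu c) (bv c), i < M := by
    intro c hc i hi
    have h1 := Finset.mem_Ico.mp hi
    have h2 := hbv c
    have h3 : c * n + n ≤ (S + T) * n := by
      have hc1 : c + 1 ≤ S + T := hc
      calc c * n + n = (c + 1) * n := by ring
        _ ≤ (S + T) * n := Nat.mul_le_mul_right n hc1
    omega
  -- membership facts for block elements
  have hbmem : ∀ i, i < M → 1 ≤ lB i ∧ lB i ≤ B := by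
    intro i hi
    exact Finset.mem_Icc.mp ((Finset.filter_subset _ _) (hlBmem i hi))
  -- sign facts
  have hclass : ∀ i, i < M →
      (fun i' : Fin S => if 0 < L (lB i) (Fin.castAdd T i') then (0 : Fin 3)
        else if L (lB i) (Fin.castAdd T i') = 0 then 1 else 2,
       fun i' : Fin T => if 0 < L (lB i) (Fin.natAdd S i') then (0 : Fin 2) else 1) = τ := by
    intro i hi
    exact (Finset.mem_filter.mp (hlBmem i hi)).2
  -- per-element sign, low coordinates
  have hsign1 : ∀ i, i < M → ∀ s : Fin (S + T), ∀ hs : (s : ℕ) < S,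
      (τ.1 ⟨(s : ℕ), hs⟩ = 0 → 0 < L (lB i) s) ∧
      (τ.1 ⟨(s : ℕ), hs⟩ = 1 → L (lB i) s = 0) ∧
      (τ.1 ⟨(s : ℕ), hs⟩ = 2 → L (lB i) s < 0) := by
    intro i hi s hs
    have h1 := congrFun (congrArg Prod.fst (hclass i hi)) ⟨(s : ℕ), hs⟩
    have hcast : Fin.castAdd T ⟨(s : ℕ), hs⟩ = s := Fin.ext rfl
    simp only [hcast] at h1
    refine ⟨fun h => ?_, fun h => ?_, fun h => ?_⟩ <;> rw [h] at h1 <;>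
        split_ifs at h1 with h2 h3
    · exact h2
    · exact absurd h1 (by decide)
    · exact absurd h1 (by decide)
    · exact absurd h1 (by decide)
    · exact h3
    · exact absurd h1 (by decide)
    · exact absurd h1 (by decide)
    · exact absurd h1 (by decide)
    · omega
  have hsign2 : ∀ i, i < M → ∀ s : Fin (S + T), ∀ hs : S ≤ (s : ℕ),
      (τ.2 ⟨(s : ℕ) - S, by have := s.isLt; omega⟩ = 0 → 0 < L (lB i) s) ∧
      (τ.2 ⟨(s : ℕ) - S, by have := s.isLt; omega⟩ ≠ 0 → L (lB i) s < 0) := by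
    intro i hi s hs
    have h1 := congrFun (congrArg Prod.snd (hclass i hi)) ⟨(s : ℕ) - S, by have := s.isLt; omega⟩
    have hcast : Fin.natAdd S ⟨(s : ℕ) - S, by have := s.isLt; omega⟩ = s :=
      Fin.ext (by simp; omega)
    simp only [hcast] at h1
    have hnz := hL (lB i) (hbmem i hi).1 (hbmem i hi).2 s hs
    constructor
    · intro h; rw [h] at h1; split_ifs at h1 with h2
      · exact h2
      · exact absurd h1 (by decide)
    · intro h; split_ifs at h1 with h2
      · exact absurd h1.symm h
      · omega
  -- block-level signs and nonemptiness
  have hbne : ∀ c, (Finset.Ico (bu c) (bv c)).Nonempty :=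
    fun c => ⟨bu c, Finset.mem_Ico.mpr ⟨le_refl _, hbuv c⟩⟩
  refine ⟨fun k => ((Finset.range k).biUnion (fun c => Finset.Ico (bu c) (bv c))).image lB,
    y, ?_, ?_, ?_, ?_⟩
  · intro k hk b hb
    obtain ⟨i, hi, rfl⟩ := Finset.mem_image.mp hb
    obtain ⟨c, hc, hi2⟩ := Finset.mem_biUnion.mp hi
    have hc' : c < S + T := lt_of_lt_of_le (Finset.mem_range.mp hc) hk
    have := hbmem i (hblt c hc' i hi2)
    exact Finset.mem_Icc.mpr this
  · intro k hk s
    have hdisj : (↑(Finset.range k) : Set ℕ).PairwiseDisjoint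
        (fun c => Finset.Ico (bu c) (bv c)) := by
      have haux : ∀ c c', c < c' → bv c ≤ bu c' := by
        intro c c' hcc
        have h1 := hbv c
        have h2 := hbu c'
        have : c * n + n ≤ c' * n := by
          calc c * n + n = (c + 1) * n := by ring
            _ ≤ c' * n := Nat.mul_le_mul_right n hcc
        omega
      intro c _ c' _ hne
      rcases lt_or_gt_of_ne hne with h | h <;>
      · have := haux _ _ h
        simp only [Finset.disjoint_left]
        intro i hi1 hi2
        have := Finset.mem_Ico.mp hi1
        have := Finset.mem_Ico.mp hi2
        omega
    have hinj : ∀ x ∈ (Finset.range k).biUnion (fun c => Finset.Ico (bu c) (bv c)),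
        ∀ z ∈ (Finset.range k).biUnion (fun c => Finset.Ico (bu c) (bv c)),
        lB x = lB z → x = z := by
      have hltM : ∀ x ∈ (Finset.range k).biUnion (fun c => Finset.Ico (bu c) (bv c)), x < M := by
        intro x hx
        obtain ⟨c, hc, hx2⟩ := Finset.mem_biUnion.mp hx
        exact hblt c (lt_of_lt_of_le (Finset.mem_range.mp hc) hk) x hx2
      intro x hx z hz hxz
      rcases lt_trichotomy x z with h | h | h
      · exact absurd hxz (hlBmono x z h (hltM z hz)).ne
      · exact h
      · exact absurd hxz.symm (hlBmono z x h (hltM x hx)).ne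
    rw [Finset.sum_image hinj, Finset.sum_biUnion hdisj]
  · intro c _ s; exact hbdvd c s
  · intro s
    constructor
    · intro hs
      have h3 : (τ.1 ⟨(s : ℕ), hs⟩).val < 3 := (τ.1 ⟨(s : ℕ), hs⟩).isLt
      interval_cases h : (τ.1 ⟨(s : ℕ), hs⟩).val
      · left
        intro c hc
        exact Finset.sum_pos (fun i hi => (hsign1 i (hblt c hc i hi) s hs).1
          (Fin.ext h)) (hbne c)
      · right; right
        intro c hc
        exact Finset.sum_eq_zero (fun i hi => (hsign1 i (hblt c hc i hi) s hs).2.1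
          (Fin.ext h))
      · right; left
        intro c hc
        exact Finset.sum_neg (fun i hi => (hsign1 i (hblt c hc i hi) s hs).2.2
          (Fin.ext h)) (hbne c)
    · intro hs
      by_cases h : τ.2 ⟨(s : ℕ) - S, by have := s.isLt; omega⟩ = 0
      · left
        intro c hc
        exact Finset.sum_pos (fun i hi => (hsign2 i (hblt c hc i hi) s hs).1 h) (hbne c)
      · right
        intro c hc
        exact Finset.sum_neg (fun i hi => (hsign2 i (hblt c hc i hi) s hs).2 h) (hbne c)

/-- Arithmetic core of Proposition 3.1: a nonempty subfamily of the j's together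
with a subfamily of the l's whose total sum has every entry a nonzero multiple of q. -/
theorem arithmetic_core (q S T A B : ℕ) (hq : 0 < q) (hS : 0 < S) (hT : 0 < T)
    (hA : 2 ^ S * q ^ (S + T) ≤ A)
    (hB : 3 ^ S * 2 ^ T * (S + T) * q ^ (S + T) ≤ B)
    (J : ℕ → Fin (S + T) → ℤ) (L : ℕ → Fin (S + T) → ℤ)
    (hJ : ∀ a : ℕ, 1 ≤ a → a ≤ A → ∀ s : Fin (S + T), (s : ℕ) < S → J a s ≠ 0)
    (hL : ∀ b : ℕ, 1 ≤ b → b ≤ B → ∀ s : Fin (S + T), S ≤ (s : ℕ) → L b s ≠ 0) :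
    ∃ 𝒜 ℬ : Finset ℕ, 𝒜 ⊆ Finset.Icc 1 A ∧ ℬ ⊆ Finset.Icc 1 B ∧ 𝒜.Nonempty ∧
      ∀ s : Fin (S + T),
        (∑ a ∈ 𝒜, J a s) + (∑ b ∈ ℬ, L b s) ≠ 0 ∧
        (q : ℤ) ∣ (∑ a ∈ 𝒜, J a s) + (∑ b ∈ ℬ, L b s) := by
  obtain ⟨𝒜, h𝒜sub, h𝒜ne, h𝒜⟩ := partA q S T A hq hS hA J hJ
  obtain ⟨𝓑, y, hBsub, hBsum, hydvd, hysign⟩ := partB q S T B hq hB L hL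
  set x : Fin (S + T) → ℤ := fun s => ∑ a ∈ 𝒜, J a s with hx
  have key : ∃ k, k ≤ S + T ∧
      ∀ s : Fin (S + T), x s + ∑ c ∈ Finset.range k, y c s ≠ 0 := by
    by_contra hcon
    push_neg at hcon
    set f : ℕ → Fin (S + T) := fun k =>
      if h : ∃ s, x s + ∑ c ∈ Finset.range k, y c s = 0 then h.choose
      else ⟨0, by omega⟩ with hf
    have hfz : ∀ k, k ≤ S + T → x (f k) + ∑ c ∈ Finset.range k, y c (f k) = 0 := by
      intro k hk
      obtain ⟨s, hs⟩ := hcon k hk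
      have hex : ∃ s, x s + ∑ c ∈ Finset.range k, y c s = 0 := ⟨s, hs⟩
      simp only [hf, dif_pos hex]
      exact hex.choose_spec
    have huniq : ∀ s : Fin (S + T), ∀ k, k ≤ S + T → ∀ k', k' ≤ S + T →
        x s + ∑ c ∈ Finset.range k, y c s = 0 →
        x s + ∑ c ∈ Finset.range k', y c s = 0 → k = k' := by
      intro s k hk k' hk' e1 e2
      by_cases hsS : (s : ℕ) < S
      · rcases (hysign s).1 hsS with hp | hn | hz
        · exact sum_shift_zero_unique (fun c => y c s) (x s) (S + T) (Or.inl hp)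
            k k' hk hk' e1 e2
        · exact sum_shift_zero_unique (fun c => y c s) (x s) (S + T) (Or.inr hn)
            k k' hk hk' e1 e2
        · exfalso
          have hz0 : ∑ c ∈ Finset.range k, y c s = 0 :=
            Finset.sum_eq_zero (fun c hc => hz c (lt_of_lt_of_le (Finset.mem_range.mp hc) hk))
          exact (h𝒜 s).1 hsS (by linarith)
      · rcases (hysign s).2 (le_of_not_gt hsS) with hp | hn
        · exact sum_shift_zero_unique (fun c => y c s) (x s) (S + T) (Or.inl hp)
            k k' hk hk' e1 e2
        · exact sum_shift_zero_unique (fun c => y c s) (x s) (S + T) (Or.inr hn)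
            k k' hk hk' e1 e2
    have hinj : Set.InjOn f ↑(Finset.range (S + T + 1)) := by
      intro k hk k' hk' hkk
      have hk1 : k ≤ S + T := by
        have := Finset.mem_range.mp (Finset.mem_coe.mp hk); omega
      have hk2 : k' ≤ S + T := by
        have := Finset.mem_range.mp (Finset.mem_coe.mp hk'); omega
      have e1 := hfz k hk1
      have e2 := hfz k' hk2
      rw [hkk] at e1
      exact huniq (f k') k hk1 k' hk2 e1 e2
    have hcard := Finset.card_le_card_of_injOn f
      (fun k _ => Finset.mem_univ (f k)) hinj
    rw [Finset.card_range, Finset.card_univ, Fintype.card_fin] at hcard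
    omega
  obtain ⟨k, hk, hknz⟩ := key
  refine ⟨𝒜, 𝓑 k, h𝒜sub, hBsub k hk, h𝒜ne, fun s => ?_⟩
  rw [hBsum k hk s]
  exact ⟨hknz s, dvd_add ((h𝒜 s).2)
    (Finset.dvd_sum (fun c hc => hydvd c (lt_of_lt_of_le (Finset.mem_range.mp hc) hk) s))⟩
end
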